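/- Let P be the path 1−2−⋯−(n−1), let 1 < k < n−1, and let T be the tree obtained by attaching vertex n to vertex k. Let A be a nonnegative symmetric n×n matrix. Let T_1 be the path obtained from T by deleting edge {n,k} and adding edge {n,1}, and T_2 the path obtained by deleting {n,k} and adding {n,n−1}. If F_A(T_1) ≤ F_A(T) and F_A(T_2) ≤ F_A(T), then a_{1,n} + ⋯ + a_{k−1,n} = a_{k,n} + ⋯ + a_{n−1,n} and F_A(T_1) = F_A(T) = F_A(T_2). -/
import Mathlib


open SimpleGraph Finset

/-- `F_A(G) = ∑_{i<j} d_G(i,j) · a_{i,j}`. -/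
noncomputable def FA {n : ℕ} (A : Matrix (Fin n) (Fin n) ℝ) (G : SimpleGraph (Fin n)) : ℝ :=
  ∑ i : Fin n, ∑ j : Fin n, if i < j then (G.dist i j : ℝ) * A i j else 0

/-- `G` is a path on its vertex set (isomorphic to the path graph). -/
def IsPathGraph {n : ℕ} (G : SimpleGraph (Fin n)) : Prop :=
  Nonempty (G ≃g SimpleGraph.pathGraph n)

/-- The distance matrix of `G`. -/
noncomputable def distMat {n : ℕ} (G : SimpleGraph (Fin n)) : Matrix (Fin n) (Fin n) ℝ :=
  fun i j => (G.dist i j : ℝ)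

/-- The diagonal matrix of row sums of the distance matrix. -/
noncomputable def transMat {n : ℕ} (G : SimpleGraph (Fin n)) : Matrix (Fin n) (Fin n) ℝ :=
  Matrix.diagonal fun i => ∑ j : Fin n, (G.dist i j : ℝ)

/-- Distance signless Laplacian `D^Q(G) = T(G) + D(G)`. -/
noncomputable def DQmat {n : ℕ} (G : SimpleGraph (Fin n)) : Matrix (Fin n) (Fin n) ℝ :=
  transMat G + distMat G

/-- Distance Laplacian `D^L(G) = T(G) - D(G)`. -/
noncomputable def DLmat {n : ℕ} (G : SimpleGraph (Fin n)) : Matrix (Fin n) (Fin n) ℝ :=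
  transMat G - distMat G

/-- Largest eigenvalue of a matrix, as the supremum of its spectrum. -/
noncomputable def maxEig {n : ℕ} (M : Matrix (Fin n) (Fin n) ℝ) : ℝ :=
  sSup (spectrum ℝ M)

/-- The tree obtained from the path on vertices `0, 1, …, n-2` (paper's `1, …, n-1`)
by attaching the last vertex `n-1` (paper's `n`) to the vertex `m`. -/
def attachTree (n : ℕ) (m : Fin n) : SimpleGraph (Fin n) :=
  SimpleGraph.fromRel fun u v =>
    (u.val + 1 = v.val ∧ v.val < n - 1) ∨ (u.val = n - 1 ∧ v = m)


lemma attach_adj {n : ℕ} (m : Fin n) (u v : Fin n) :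
    (attachTree n m).Adj u v ↔ u ≠ v ∧
      ((u.val + 1 = v.val ∧ v.val < n - 1) ∨ (u.val = n - 1 ∧ v = m) ∨
       (v.val + 1 = u.val ∧ u.val < n - 1) ∨ (v.val = n - 1 ∧ u = m)) := by
  simp only [attachTree, SimpleGraph.fromRel_adj]
  tauto

lemma walk_up {n : ℕ} (m : Fin n) : ∀ (d : ℕ) (a b : Fin n), a.val + d = b.val → b.val ≤ n - 2 →
    ∃ p : (attachTree n m).Walk a b, p.length = d := by
  intro d
  induction d with
  | zero =>
    intro a b h _
    have : a = b := Fin.ext (by omega)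
    subst this
    exact ⟨.nil, rfl⟩
  | succ d ih =>
    intro a b h hb
    have hbn : b.val < n := b.isLt
    have hb1 : 1 ≤ b.val := by omega
    set b' : Fin n := ⟨b.val - 1, by omega⟩ with hb'
    have hadj : (attachTree n m).Adj b' b := by
      rw [attach_adj]
      exact ⟨by simp [Fin.ext_iff, hb']; omega, Or.inl ⟨by simp [hb']; omega, by omega⟩⟩
    obtain ⟨p, hp⟩ := ih a b' (by simp [hb']; omega) (by simp [hb']; omega)
    exact ⟨p.concat hadj, by simp [hp]⟩

lemma dist_le_natDist {n : ℕ} (m : Fin n) (i j : Fin n)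
    (hi : i.val ≤ n - 2) (hj : j.val ≤ n - 2) :
    (attachTree n m).dist i j ≤ Nat.dist i.val j.val := by
  rcases le_total i.val j.val with h | h
  · obtain ⟨p, hp⟩ := walk_up m (j.val - i.val) i j (by omega) hj
    rw [Nat.dist_eq_sub_of_le h]
    exact hp ▸ SimpleGraph.dist_le p
  · obtain ⟨p, hp⟩ := walk_up m (i.val - j.val) j i (by omega) hi
    rw [SimpleGraph.dist_comm, Nat.dist_comm, Nat.dist_eq_sub_of_le h]
    exact hp ▸ SimpleGraph.dist_le p

lemma lip_walk' {n : ℕ} {G : SimpleGraph (Fin n)} (f : Fin n → ℤ)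
    (hf : ∀ u v, G.Adj u v → |f u - f v| ≤ 1) :
    ∀ {u v : Fin n} (p : G.Walk u v), |f u - f v| ≤ p.length := by
  intro u v p
  induction p with
  | nil => simp
  | @cons a b c h p ih =>
    have := hf a b h
    have h2 := abs_sub_le (f a) (f b) (f c)
    simp only [SimpleGraph.Walk.length_cons]
    push_cast
    linarith

lemma lip_dist' {n : ℕ} {G : SimpleGraph (Fin n)} (f : Fin n → ℤ)
    (hf : ∀ u v, G.Adj u v → |f u - f v| ≤ 1) {u v : Fin n} (hr : G.Reachable u v) :
    |f u - f v| ≤ G.dist u v := by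
  obtain ⟨p, hp⟩ := hr.exists_walk_length_eq_dist
  rw [← hp]; exact lip_walk' f hf p

lemma natDist_cast_int (a b : ℕ) : (Nat.dist a b : ℤ) = |(a:ℤ) - b| := by
  rcases le_total a b with h | h
  · rw [Nat.dist_eq_sub_of_le h, abs_of_nonpos (by push_cast; omega)]
    push_cast [h]; ring
  · rw [Nat.dist_eq_sub_of_le_right h, abs_of_nonneg (by push_cast; omega)]
    push_cast [h]; ring

lemma adj_vals {n : ℕ} {m u v : Fin n} (h : (attachTree n m).Adj u v) :
    (u.val + 1 = v.val ∧ v.val < n - 1) ∨ (u.val = n - 1 ∧ v.val = m.val) ∨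
    (v.val + 1 = u.val ∧ u.val < n - 1) ∨ (v.val = n - 1 ∧ u.val = m.val) := by
  rw [attach_adj] at h
  obtain ⟨-, hc⟩ := h
  rcases hc with ⟨h1, h2⟩ | ⟨h1, h2⟩ | ⟨h1, h2⟩ | ⟨h1, h2⟩
  · exact Or.inl ⟨h1, h2⟩
  · exact Or.inr (Or.inl ⟨h1, by rw [h2]⟩)
  · exact Or.inr (Or.inr (Or.inl ⟨h1, h2⟩))
  · exact Or.inr (Or.inr (Or.inr ⟨h1, by rw [h2]⟩))

lemma dist_path' {n : ℕ} (m i j : Fin n) (hm : m.val < n - 1)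
    (hi : i.val < n - 1) (hj : j.val < n - 1) :
    (attachTree n m).dist i j = Nat.dist i.val j.val := by
  have hr : (attachTree n m).Reachable i j := by
    rcases le_total i.val j.val with h | h
    · obtain ⟨p, -⟩ := walk_up m (j.val - i.val) i j (by omega) (by omega)
      exact ⟨p⟩
    · obtain ⟨p, -⟩ := walk_up m (i.val - j.val) j i (by omega) (by omega)
      exact ⟨p.reverse⟩
  apply le_antisymm (dist_le_natDist m i j (by omega) (by omega))
  set f : Fin n → ℤ := fun x => if x.val = n - 1 then (m.val : ℤ) else x.val with hf
  have hlip : ∀ u v, (attachTree n m).Adj u v → |f u - f v| ≤ 1 := by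
    intro u v h
    have hc := adj_vals h
    have hu := u.isLt
    have hv := v.isLt
    simp only [hf]
    rw [abs_le]
    split_ifs <;> constructor <;> omega
  have h1 := lip_dist' f hlip hr
  have h2 : f i = i.val := by simp only [hf]; rw [if_neg (by omega)]
  have h3 : f j = j.val := by simp only [hf]; rw [if_neg (by omega)]
  rw [h2, h3, ← natDist_cast_int] at h1
  exact_mod_cast h1

lemma abs_helper (a b : ℤ) (h : a - b = 1 ∨ a - b = -1) : |(|a| - |b|)| ≤ 1 := by
  have := abs_abs_sub_abs_le_abs_sub a b
  rcases h with h | h <;> rw [h] at this <;> simpa using this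

lemma dist_last' {n : ℕ} (m i lastv : Fin n) (hm : m.val < n - 1)
    (hlast : lastv.val = n - 1) (hi : i.val < n - 1) :
    (attachTree n m).dist i lastv = Nat.dist i.val m.val + 1 := by
  have hadj : (attachTree n m).Adj m lastv := by
    rw [attach_adj]
    exact ⟨Fin.ne_of_val_ne (by omega), Or.inr (Or.inr (Or.inr ⟨hlast, rfl⟩))⟩
  -- upper bound walk
  have hup : (attachTree n m).dist i lastv ≤ Nat.dist i.val m.val + 1 := by
    rcases le_total i.val m.val with h | h
    · obtain ⟨p, hp⟩ := walk_up m (m.val - i.val) i m (by omega) (by omega)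
      have := SimpleGraph.dist_le (p.concat hadj)
      rw [SimpleGraph.Walk.length_concat, hp] at this
      rw [Nat.dist_eq_sub_of_le h]
      omega
    · obtain ⟨p, hp⟩ := walk_up m (i.val - m.val) m i (by omega) (by omega)
      have := SimpleGraph.dist_le (p.reverse.concat hadj)
      rw [SimpleGraph.Walk.length_concat, SimpleGraph.Walk.length_reverse, hp] at this
      rw [Nat.dist_eq_sub_of_le_right h]
      omega
  apply le_antisymm hup
  have hr : (attachTree n m).Reachable i lastv := by
    rcases le_total i.val m.val with h | h
    · obtain ⟨p, -⟩ := walk_up m (m.val - i.val) i m (by omega) (by omega)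
      exact ⟨p.concat hadj⟩
    · obtain ⟨p, -⟩ := walk_up m (i.val - m.val) m i (by omega) (by omega)
      exact ⟨p.reverse.concat hadj⟩
  set f : Fin n → ℤ := fun x => if x.val = n - 1 then -1 else |(x.val : ℤ) - m.val| with hf
  have hlip : ∀ u v, (attachTree n m).Adj u v → |f u - f v| ≤ 1 := by
    intro u v h
    have hc := adj_vals h
    have hu := u.isLt
    have hv := v.isLt
    simp only [hf]
    split_ifs with w1 w2 w2
    · omega
    · rw [abs_sub_comm]
      have hveq : |(v.val : ℤ) - m.val| = 0 := by
        rw [abs_eq_zero]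
        omega
      rw [hveq]
      norm_num
    · have hueq : |(u.val : ℤ) - m.val| = 0 := by
        rw [abs_eq_zero]
        omega
      rw [hueq]
      norm_num
    · exact abs_helper _ _ (by omega)
  have h1 := lip_dist' f hlip hr
  have h2 : f i = |(i.val : ℤ) - m.val| := by simp only [hf]; rw [if_neg (by omega)]
  have h3 : f lastv = -1 := by simp only [hf]; rw [if_pos (by omega)]
  rw [h2, h3] at h1
  have h4 : |(|(i.val : ℤ) - m.val| - -1)| = |(i.val : ℤ) - m.val| + 1 := by
    have h0 : (0:ℤ) ≤ |(i.val : ℤ) - m.val| := abs_nonneg _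
    rw [abs_of_nonneg (by linarith)]
    ring
  rw [h4, ← natDist_cast_int] at h1
  exact_mod_cast h1


lemma FA_diff {n : ℕ} (A : Matrix (Fin n) (Fin n) ℝ) (m k' lastv : Fin n)
    (hm : m.val < n - 1) (hk : k'.val < n - 1) (hlast : lastv.val = n - 1) :
    FA A (attachTree n m) - FA A (attachTree n k') =
      ∑ i : Fin n, (if i.val < n - 1 then
        ((Nat.dist i.val m.val : ℝ) - (Nat.dist i.val k'.val : ℝ)) * A i lastv else 0) := by
  unfold FA
  rw [← Finset.sum_sub_distrib]
  apply Finset.sum_congr rfl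
  intro i _
  rw [← Finset.sum_sub_distrib]
  rw [Finset.sum_eq_single lastv]
  · have hlt : i < lastv ↔ i.val < n - 1 := by
      rw [Fin.lt_def, hlast]
    by_cases hi : i.val < n - 1
    · rw [if_pos (hlt.mpr hi), if_pos (hlt.mpr hi), if_pos hi,
        dist_last' m i lastv hm hlast hi, dist_last' k' i lastv hk hlast hi]
      push_cast
      ring
    · rw [if_neg (fun h => hi (hlt.mp h)), if_neg (fun h => hi (hlt.mp h)), if_neg hi]
      ring
  · intro j _ hj
    have hjv : j.val < n - 1 := by
      have h1 := j.isLt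
      have h2 : j.val ≠ n - 1 := fun h => hj (Fin.ext (h.trans hlast.symm))
      omega
    by_cases hij : i < j
    · have hiv : i.val < n - 1 := by
        rw [Fin.lt_def] at hij
        omega
      rw [if_pos hij, if_pos hij, dist_path' m i j hm hiv hjv, dist_path' k' i j hk hiv hjv]
      ring
    · rw [if_neg hij, if_neg hij]
      ring
  · intro h
    exact absurd (Finset.mem_univ lastv) h

set_option maxHeartbeats 2000000 in
theorem stmt_17 {n : ℕ} (k : Fin n) (hk0 : 0 < k.val) (hk1 : k.val < n - 2)
    (A : Matrix (Fin n) (Fin n) ℝ) (hsymm : A.IsSymm) (hnn : ∀ i j, 0 ≤ A i j)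
    (lastv : Fin n) (hlast : lastv.val = n - 1)
    (zerov : Fin n) (hzero : zerov.val = 0)
    (prev : Fin n) (hprev : prev.val = n - 2) :
    FA A (attachTree n zerov) ≤ FA A (attachTree n k) →
    FA A (attachTree n prev) ≤ FA A (attachTree n k) →
    ((∑ i : Fin n, if i.val < k.val then A i lastv else 0) =
        (∑ i : Fin n, if k.val ≤ i.val ∧ i.val < n - 1 then A i lastv else 0) ∧
      FA A (attachTree n zerov) = FA A (attachTree n k) ∧
      FA A (attachTree n prev) = FA A (attachTree n k)) := by
  intro h0 hp2
  have hn4 : 4 ≤ n := by omega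
  have hku : k.val < n - 1 := by omega
  have hzu : zerov.val < n - 1 := by omega
  have hpu : prev.val < n - 1 := by omega
  have hD0 := FA_diff A zerov k lastv hzu hku hlast
  have hDp := FA_diff A prev k lastv hpu hku hlast
  set S1 : ℝ := ∑ i : Fin n, if i.val < k.val then A i lastv else 0 with hS1
  set S2 : ℝ := ∑ i : Fin n, if k.val ≤ i.val ∧ i.val < n - 1 then A i lastv else 0 with hS2
  have key1 : 0 ≤ (FA A (attachTree n zerov) - FA A (attachTree n k))
      + (k.val : ℝ) * S1 - (k.val : ℝ) * S2 := by
    rw [hD0, hS1, hS2, Finset.mul_sum, Finset.mul_sum, ← Finset.sum_add_distrib,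
      ← Finset.sum_sub_distrib]
    apply Finset.sum_nonneg
    intro i _
    have ha := hnn i lastv
    have hiv := i.isLt
    simp only [mul_ite, mul_zero]
    split_ifs with w1 w2 w3 <;> try (exfalso; omega)
    · -- i < k
      have e0 : (Nat.dist i.val zerov.val : ℝ) = (i.val : ℝ) := by
        rw [hzero, Nat.dist_zero_right]
      have ek : (Nat.dist i.val k.val : ℝ) = (k.val : ℝ) - (i.val : ℝ) := by
        have h : i.val ≤ k.val := by omega
        rw [Nat.dist_eq_sub_of_le h]
        push_cast [h]
        ring
      rw [e0, ek]
      nlinarith [mul_nonneg (Nat.cast_nonneg i.val (α := ℝ)) ha]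
    · -- k ≤ i < n-1
      have e0 : (Nat.dist i.val zerov.val : ℝ) = (i.val : ℝ) := by
        rw [hzero, Nat.dist_zero_right]
      have ek : (Nat.dist i.val k.val : ℝ) = (i.val : ℝ) - (k.val : ℝ) := by
        have h : k.val ≤ i.val := by omega
        rw [Nat.dist_eq_sub_of_le_right h]
        push_cast [h]
        ring
      rw [e0, ek]
      nlinarith []
    · norm_num
  have key2 : 0 ≤ (FA A (attachTree n prev) - FA A (attachTree n k))
      + ((prev.val : ℝ) - (k.val : ℝ)) * S2 - ((prev.val : ℝ) - (k.val : ℝ)) * S1 := by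
    rw [hDp, hS1, hS2, Finset.mul_sum, Finset.mul_sum, ← Finset.sum_add_distrib,
      ← Finset.sum_sub_distrib]
    apply Finset.sum_nonneg
    intro i _
    have ha := hnn i lastv
    have hiv := i.isLt
    simp only [mul_ite, mul_zero]
    split_ifs with w1 w2 w3 <;> try (exfalso; omega)
    · -- k ≤ i < n-1
      have ep : (Nat.dist i.val prev.val : ℝ) = (prev.val : ℝ) - (i.val : ℝ) := by
        have h : i.val ≤ prev.val := by omega
        rw [Nat.dist_eq_sub_of_le h]
        push_cast [h]
        ring
      have ek : (Nat.dist i.val k.val : ℝ) = (i.val : ℝ) - (k.val : ℝ) := by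
        have h : k.val ≤ i.val := by omega
        rw [Nat.dist_eq_sub_of_le_right h]
        push_cast [h]
        ring
      have hip : (i.val : ℝ) ≤ (prev.val : ℝ) := by
        have : i.val ≤ prev.val := by omega
        exact_mod_cast this
      rw [ep, ek]
      nlinarith [mul_nonneg (sub_nonneg.mpr hip) ha]
    · -- i < k
      have ep : (Nat.dist i.val prev.val : ℝ) = (prev.val : ℝ) - (i.val : ℝ) := by
        have h : i.val ≤ prev.val := by omega
        rw [Nat.dist_eq_sub_of_le h]
        push_cast [h]
        ring
      have ek : (Nat.dist i.val k.val : ℝ) = (k.val : ℝ) - (i.val : ℝ) := by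
        have h : i.val ≤ k.val := by omega
        rw [Nat.dist_eq_sub_of_le h]
        push_cast [h]
        ring
      rw [ep, ek]
      nlinarith []
    · norm_num
  have hkpos : (0 : ℝ) < (k.val : ℝ) := by exact_mod_cast hk0
  have hcpos : (0 : ℝ) < (prev.val : ℝ) - (k.val : ℝ) := by
    have : k.val < prev.val := by omega
    have := (Nat.cast_lt (α := ℝ)).mpr this
    linarith
  have hSeq : S1 = S2 := by
    have hle1 : S2 ≤ S1 := by nlinarith [key1, h0]
    have hle2 : S1 ≤ S2 := by nlinarith [key2, hp2]
    linarith
  refine ⟨hSeq, ?_, ?_⟩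
  · have : 0 ≤ FA A (attachTree n zerov) - FA A (attachTree n k) := by
      rw [hSeq] at key1
      linarith
    linarith
  · have : 0 ≤ FA A (attachTree n prev) - FA A (attachTree n k) := by
      rw [hSeq] at key2
      linarith
    linarith
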